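/- For the deterministic bilinear-game Hamiltonian, assume the solution set X* = {x ∈ ℝ^d : ξ(x) = 0} is nonempty and A ≠ 0, and let L_H = σ_max(A)² and μ_H = σ_min(A)², where σ_max(A) and σ_min(A) denote the largest and the smallest nonzero singular value of A. Run Hamiltonian gradient descent x^{k+1} = x^k − γ∇H(x^k) with γ = 1/(2L_H), and let x* be the orthogonal projection of x⁰ onto X*. Then ‖x^k − x*‖² ≤ (1 − γμ_H)^k ‖x⁰ − x*‖² for all k ≥ 0. -/

import Mathlib

/-!
STATEMENT 9: For the deterministic bilinear-game Hamiltonian with nonempty solution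
set and A ≠ 0, HGD with γ = 1/(2L_H), L_H = σ_max(A)², μ_H = σ_min(A)², satisfies
‖x^k − x*‖² ≤ (1 − γμ_H)^k ‖x⁰ − x*‖², where x* is the projection of x⁰ onto X*.
-/

open scoped RealInnerProductSpace BigOperators

noncomputable section

/-- The largest singular value of a real matrix, realized as the operator norm of the
induced linear map between Euclidean spaces. -/
def sigmaMax {d1 d2 : ℕ} (A : Matrix (Fin d1) (Fin d2) ℝ) : ℝ :=
  ‖LinearMap.toContinuousLinearMap (Matrix.toEuclideanLin A)‖

/-- Squared smallest nonzero singular value of A, i.e. the smallest nonzero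
eigenvalue of Aᵀ A. -/
def sigmaMinSq {d1 d2 : ℕ} (A : Matrix (Fin d1) (Fin d2) ℝ) : ℝ :=
  sInf {t : ℝ | t ≠ 0 ∧ ∃ v : Fin d2 → ℝ, v ≠ 0 ∧ (A.transpose * A).mulVec v = t • v}

/-- The signed gradient field ξ(x) = (A x₂ + b, −(Aᵀ x₁ + c)) of the bilinear game. -/
def xiBar {d1 d2 : ℕ} (A : Matrix (Fin d1) (Fin d2) ℝ) (b : Fin d1 → ℝ) (c : Fin d2 → ℝ)
    (x : EuclideanSpace ℝ (Fin d1 ⊕ Fin d2)) : EuclideanSpace ℝ (Fin d1 ⊕ Fin d2) :=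
  (WithLp.equiv 2 _).symm (Sum.elim
    (fun a => A.mulVec (fun j => x (Sum.inr j)) a + b a)
    (fun j => -(A.transpose.mulVec (fun a => x (Sum.inl a)) j + c j)))

/-- The Hamiltonian H(x) = ½‖ξ(x)‖². -/
def Ham {d1 d2 : ℕ} (A : Matrix (Fin d1) (Fin d2) ℝ) (b : Fin d1 → ℝ) (c : Fin d2 → ℝ)
    (x : EuclideanSpace ℝ (Fin d1 ⊕ Fin d2)) : ℝ :=
  (1 / 2 : ℝ) * ‖xiBar A b c x‖ ^ 2

def Bmat {d1 d2 : ℕ} (A : Matrix (Fin d1) (Fin d2) ℝ) :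
    Matrix (Fin d1 ⊕ Fin d2) (Fin d1 ⊕ Fin d2) ℝ :=
  Matrix.fromBlocks 0 A (-A.transpose) 0

def Mop {d1 d2 : ℕ} (A : Matrix (Fin d1) (Fin d2) ℝ) :
    EuclideanSpace ℝ (Fin d1 ⊕ Fin d2) →L[ℝ] EuclideanSpace ℝ (Fin d1 ⊕ Fin d2) :=
  LinearMap.toContinuousLinearMap (Matrix.toEuclideanLin (Bmat A))

def vvec {d1 d2 : ℕ} (b : Fin d1 → ℝ) (c : Fin d2 → ℝ) :
    EuclideanSpace ℝ (Fin d1 ⊕ Fin d2) :=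
  (WithLp.equiv 2 _).symm (Sum.elim b (fun j => -c j))

lemma Mop_apply_inl {d1 d2 : ℕ} (A : Matrix (Fin d1) (Fin d2) ℝ)
    (x : EuclideanSpace ℝ (Fin d1 ⊕ Fin d2)) (a : Fin d1) :
    Mop A x (Sum.inl a) = A.mulVec (fun j => x (Sum.inr j)) a := by
  show ((Bmat A).mulVec (fun i => x i)) (Sum.inl a) = _
  simp [Bmat, Matrix.fromBlocks_mulVec, Function.comp_def]

lemma Mop_apply_inr {d1 d2 : ℕ} (A : Matrix (Fin d1) (Fin d2) ℝ)
    (x : EuclideanSpace ℝ (Fin d1 ⊕ Fin d2)) (j : Fin d2) :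
    Mop A x (Sum.inr j) = -A.transpose.mulVec (fun a => x (Sum.inl a)) j := by
  show ((Bmat A).mulVec (fun i => x i)) (Sum.inr j) = _
  simp [Bmat, Matrix.fromBlocks_mulVec, Matrix.neg_mulVec, Function.comp_def]

lemma xiBar_eq {d1 d2 : ℕ} (A : Matrix (Fin d1) (Fin d2) ℝ) (b : Fin d1 → ℝ) (c : Fin d2 → ℝ)
    (x : EuclideanSpace ℝ (Fin d1 ⊕ Fin d2)) :
    xiBar A b c x = Mop A x + vvec b c := by
  ext i
  rcases i with a | j
  · show _ = Mop A x (Sum.inl a) + vvec b c (Sum.inl a)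
    rw [Mop_apply_inl]
    simp [xiBar, vvec]
  · show _ = Mop A x (Sum.inr j) + vvec b c (Sum.inr j)
    rw [Mop_apply_inr]
    simp [xiBar, vvec]
    ring

lemma Bmat_transpose {d1 d2 : ℕ} (A : Matrix (Fin d1) (Fin d2) ℝ) :
    (Bmat A).transpose = -(Bmat A) := by
  simp [Bmat, Matrix.fromBlocks_transpose, Matrix.fromBlocks_neg]

lemma adjoint_Mop {d1 d2 : ℕ} (A : Matrix (Fin d1) (Fin d2) ℝ) :
    ContinuousLinearMap.adjoint (Mop A) = -(Mop A) := by
  rw [Mop, ← LinearMap.adjoint_toContinuousLinearMap]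
  have h1 : LinearMap.adjoint (Matrix.toEuclideanLin (Bmat A))
      = Matrix.toEuclideanLin (-(Bmat A)) := by
    rw [← Matrix.toEuclideanLin_conjTranspose_eq_adjoint]
    congr 1
    rw [← Bmat_transpose]
    ext i j
    simp [Matrix.conjTranspose_apply]
  rw [h1, map_neg]
  rfl

lemma normsq_eq_sum {ι : Type*} [Fintype ι] (w : EuclideanSpace ℝ ι) :
    ‖w‖ ^ 2 = ∑ i, w i ^ 2 := by
  rw [← real_inner_self_eq_norm_sq]
  simp only [PiLp.inner_apply, RCLike.inner_apply, conj_trivial, sq]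

lemma normsq_sum_decomp {d1 d2 : ℕ} (w : EuclideanSpace ℝ (Fin d1 ⊕ Fin d2)) :
    ‖w‖ ^ 2 = (∑ a, w (Sum.inl a) ^ 2) + ∑ j, w (Sum.inr j) ^ 2 := by
  rw [normsq_eq_sum, Fintype.sum_sum_type]


lemma Mop_normsq_le {d1 d2 : ℕ} (A : Matrix (Fin d1) (Fin d2) ℝ)
    (u : EuclideanSpace ℝ (Fin d1 ⊕ Fin d2)) :
    ‖Mop A u‖ ^ 2 ≤ sigmaMax A ^ 2 * ‖u‖ ^ 2 := by
  set T : EuclideanSpace ℝ (Fin d2) →L[ℝ] EuclideanSpace ℝ (Fin d1) :=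
    LinearMap.toContinuousLinearMap (Matrix.toEuclideanLin A) with hT
  set T' : EuclideanSpace ℝ (Fin d1) →L[ℝ] EuclideanSpace ℝ (Fin d2) :=
    LinearMap.toContinuousLinearMap (Matrix.toEuclideanLin A.transpose) with hT'
  have hadjT : T' = ContinuousLinearMap.adjoint T := by
    rw [hT, hT', ← LinearMap.adjoint_toContinuousLinearMap,
      ← Matrix.toEuclideanLin_conjTranspose_eq_adjoint]
    have : A.conjTranspose = A.transpose := by
      ext i j; simp [Matrix.conjTranspose_apply]
    rw [this]
  have hTnorm : ‖T'‖ = ‖T‖ := by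
    rw [hadjT]; exact ContinuousLinearMap.adjoint.norm_map T
  set u1 : EuclideanSpace ℝ (Fin d1) := (WithLp.equiv 2 _).symm (fun a => u (Sum.inl a)) with hu1
  set u2 : EuclideanSpace ℝ (Fin d2) := (WithLp.equiv 2 _).symm (fun j => u (Sum.inr j)) with hu2
  have hTu2 : ∀ a, T u2 a = A.mulVec (fun j => u (Sum.inr j)) a := fun a => rfl
  have hTu1 : ∀ j, T' u1 j = A.transpose.mulVec (fun a => u (Sum.inl a)) j := fun j => rfl
  have hM : ‖Mop A u‖ ^ 2 = ‖T u2‖ ^ 2 + ‖T' u1‖ ^ 2 := by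
    rw [normsq_sum_decomp, normsq_eq_sum, normsq_eq_sum]
    congr 1
    · exact Finset.sum_congr rfl fun a _ => by rw [Mop_apply_inl, hTu2]
    · exact Finset.sum_congr rfl fun j _ => by rw [Mop_apply_inr, hTu1]; ring
  have hu : ‖u‖ ^ 2 = ‖u1‖ ^ 2 + ‖u2‖ ^ 2 := by
    rw [normsq_sum_decomp, normsq_eq_sum, normsq_eq_sum]; rfl
  have h1 : ‖T u2‖ ≤ ‖T‖ * ‖u2‖ := T.le_opNorm u2
  have h2 : ‖T' u1‖ ≤ ‖T‖ * ‖u1‖ := hTnorm ▸ T'.le_opNorm u1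
  have hσ : sigmaMax A = ‖T‖ := rfl
  rw [hM, hu, hσ, mul_add]
  have g1 : ‖T u2‖ ^ 2 ≤ ‖T‖ ^ 2 * ‖u2‖ ^ 2 := by
    rw [← mul_pow]; exact pow_le_pow_left₀ (norm_nonneg _) h1 2
  have g2 : ‖T' u1‖ ^ 2 ≤ ‖T‖ ^ 2 * ‖u1‖ ^ 2 := by
    rw [← mul_pow]; exact pow_le_pow_left₀ (norm_nonneg _) h2 2
  linarith

def Sop {d1 d2 : ℕ} (A : Matrix (Fin d1) (Fin d2) ℝ) :
    EuclideanSpace ℝ (Fin d1 ⊕ Fin d2) →L[ℝ] EuclideanSpace ℝ (Fin d1 ⊕ Fin d2) :=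
  (ContinuousLinearMap.adjoint (Mop A)).comp (Mop A)

lemma Sop_inner {d1 d2 : ℕ} (A : Matrix (Fin d1) (Fin d2) ℝ)
    (u : EuclideanSpace ℝ (Fin d1 ⊕ Fin d2)) :
    ⟪Sop A u, u⟫ = ‖Mop A u‖ ^ 2 := by
  rw [Sop, ContinuousLinearMap.comp_apply, ContinuousLinearMap.adjoint_inner_left,
    real_inner_self_eq_norm_sq]

lemma Sop_symm {d1 d2 : ℕ} (A : Matrix (Fin d1) (Fin d2) ℝ) :
    ∀ u w : EuclideanSpace ℝ (Fin d1 ⊕ Fin d2), ⟪Sop A u, w⟫ = ⟪u, Sop A w⟫ := by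
  intro u w
  rw [Sop, ContinuousLinearMap.comp_apply, ContinuousLinearMap.comp_apply,
    ContinuousLinearMap.adjoint_inner_left, ContinuousLinearMap.adjoint_inner_right]

lemma Sop_ker {d1 d2 : ℕ} (A : Matrix (Fin d1) (Fin d2) ℝ)
    (w : EuclideanSpace ℝ (Fin d1 ⊕ Fin d2)) (hw : Sop A w = 0) : Mop A w = 0 := by
  have h := Sop_inner A w
  rw [hw] at h
  simp only [inner_zero_left] at h
  have : ‖Mop A w‖ = 0 := by nlinarith [norm_nonneg (Mop A w)]
  simpa using this

lemma Sop_apply_inl {d1 d2 : ℕ} (A : Matrix (Fin d1) (Fin d2) ℝ)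
    (u : EuclideanSpace ℝ (Fin d1 ⊕ Fin d2)) (a : Fin d1) :
    Sop A u (Sum.inl a) = ((A * A.transpose).mulVec (fun a' => u (Sum.inl a'))) a := by
  have : Sop A u = -(Mop A (Mop A u)) := by
    rw [Sop, ContinuousLinearMap.comp_apply, adjoint_Mop]; rfl
  rw [this]
  show -(Mop A (Mop A u) (Sum.inl a)) = _
  rw [Mop_apply_inl]
  have : (fun j => Mop A u (Sum.inr j)) = fun j => -A.transpose.mulVec (fun a' => u (Sum.inl a')) j := by
    funext j; rw [Mop_apply_inr]
  rw [this]
  have : A.mulVec (fun j => -A.transpose.mulVec (fun a' => u (Sum.inl a')) j)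
      = -(A.mulVec (A.transpose.mulVec (fun a' => u (Sum.inl a')))) := by
    rw [← Matrix.mulVec_neg]; rfl
  rw [this, Matrix.mulVec_mulVec]
  simp

lemma Sop_apply_inr {d1 d2 : ℕ} (A : Matrix (Fin d1) (Fin d2) ℝ)
    (u : EuclideanSpace ℝ (Fin d1 ⊕ Fin d2)) (j : Fin d2) :
    Sop A u (Sum.inr j) = ((A.transpose * A).mulVec (fun j' => u (Sum.inr j'))) j := by
  have : Sop A u = -(Mop A (Mop A u)) := by
    rw [Sop, ContinuousLinearMap.comp_apply, adjoint_Mop]; rfl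
  rw [this]
  show -(Mop A (Mop A u) (Sum.inr j)) = _
  rw [Mop_apply_inr]
  have : (fun a => Mop A u (Sum.inl a)) = fun a => A.mulVec (fun j' => u (Sum.inr j')) a := by
    funext a; rw [Mop_apply_inl]
  rw [this]
  have h2 : A.transpose.mulVec (fun a => A.mulVec (fun j' => u (Sum.inr j')) a)
      = (A.transpose * A).mulVec (fun j' => u (Sum.inr j')) := by
    rw [← Matrix.mulVec_mulVec]
  rw [neg_neg]
  exact congrFun h2 j

open Matrix in
lemma set_nonneg {d1 d2 : ℕ} (A : Matrix (Fin d1) (Fin d2) ℝ) :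
    ∀ t ∈ {t : ℝ | t ≠ 0 ∧ ∃ v : Fin d2 → ℝ, v ≠ 0 ∧ (A.transpose * A).mulVec v = t • v},
      0 ≤ t := by
  rintro t ⟨ht, v, hv, heq⟩
  have key : t * (v ⬝ᵥ v) = (A.mulVec v) ⬝ᵥ (A.mulVec v) := by
    have h1 : (A.transpose * A).mulVec v = A.transpose.mulVec (A.mulVec v) := by
      rw [Matrix.mulVec_mulVec]
    have h2 : (A.transpose.mulVec (A.mulVec v)) ⬝ᵥ v = (A.mulVec v) ⬝ᵥ (A.mulVec v) := by
      rw [Matrix.mulVec_transpose, ← Matrix.dotProduct_mulVec]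
    calc t * (v ⬝ᵥ v) = (t • v) ⬝ᵥ v := by rw [smul_dotProduct]; rfl
    _ = ((A.transpose * A).mulVec v) ⬝ᵥ v := by rw [heq]
    _ = (A.mulVec v) ⬝ᵥ (A.mulVec v) := by rw [h1, h2]
  have hvv : 0 < v ⬝ᵥ v := by
    rcases Function.ne_iff.mp hv with ⟨i, hi⟩
    have h0 : 0 ≤ v ⬝ᵥ v := Finset.sum_nonneg fun i _ => mul_self_nonneg _
    have : v ⬝ᵥ v ≠ 0 := by
      intro h
      have := Finset.sum_eq_zero_iff_of_nonneg (fun i _ => mul_self_nonneg (v i)) |>.mp h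
      apply hi
      have h3 := mul_self_eq_zero.mp (this i (Finset.mem_univ i))
      simpa using h3
    exact lt_of_le_of_ne h0 (Ne.symm this)
  have hAv : 0 ≤ (A.mulVec v) ⬝ᵥ (A.mulVec v) := Finset.sum_nonneg fun i _ => mul_self_nonneg _
  nlinarith

lemma eig_mem {d1 d2 : ℕ} (A : Matrix (Fin d1) (Fin d2) ℝ) (t : ℝ)
    (u : EuclideanSpace ℝ (Fin d1 ⊕ Fin d2)) (hu : u ≠ 0) (ht : t ≠ 0)
    (heig : Sop A u = t • u) :
    t ∈ {t : ℝ | t ≠ 0 ∧ ∃ v : Fin d2 → ℝ, v ≠ 0 ∧ (A.transpose * A).mulVec v = t • v} := by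
  refine ⟨ht, ?_⟩
  set u1 : Fin d1 → ℝ := fun a => u (Sum.inl a) with hu1
  set u2 : Fin d2 → ℝ := fun j => u (Sum.inr j) with hu2
  have h2 : (A.transpose * A).mulVec u2 = t • u2 := by
    funext j
    have := congrFun (congrArg (fun (z : EuclideanSpace ℝ (Fin d1 ⊕ Fin d2)) (i : Fin d1 ⊕ Fin d2) => z i) heig) (Sum.inr j)
    rw [← Sop_apply_inr A u j]
    exact this
  have h1 : (A * A.transpose).mulVec u1 = t • u1 := by
    funext a
    have := congrFun (congrArg (fun (z : EuclideanSpace ℝ (Fin d1 ⊕ Fin d2)) (i : Fin d1 ⊕ Fin d2) => z i) heig) (Sum.inl a)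
    rw [← Sop_apply_inl A u a]
    exact this
  by_cases hu2z : u2 = 0
  · have hu1z : u1 ≠ 0 := by
      intro h
      apply hu
      ext i
      rcases i with a | j
      · exact congrFun h a
      · exact congrFun hu2z j
    refine ⟨A.transpose.mulVec u1, ?_, ?_⟩
    · intro hv
      have : (A * A.transpose).mulVec u1 = 0 := by
        rw [← Matrix.mulVec_mulVec, hv, Matrix.mulVec_zero]
      rw [h1] at this
      exact hu1z (by simpa [smul_eq_zero, ht] using this)
    · rw [← Matrix.mulVec_mulVec]
      calc A.transpose.mulVec (A.mulVec (A.transpose.mulVec u1))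
          = A.transpose.mulVec ((A * A.transpose).mulVec u1) :=
            congrArg _ (Matrix.mulVec_mulVec u1 A A.transpose)
        _ = A.transpose.mulVec (t • u1) := by rw [h1]
        _ = t • A.transpose.mulVec u1 := Matrix.mulVec_smul _ _ _
  · exact ⟨u2, hu2z, h2⟩

lemma real_conjTranspose {m n : Type*} (M : Matrix m n ℝ) :
    M.conjTranspose = M.transpose := by
  ext i j; simp [Matrix.conjTranspose_apply]

open Matrix in
lemma exists_elem_le {d1 d2 : ℕ} (A : Matrix (Fin d1) (Fin d2) ℝ) (hA : A ≠ 0) :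
    ∃ t ∈ {t : ℝ | t ≠ 0 ∧ ∃ v : Fin d2 → ℝ, v ≠ 0 ∧ (A.transpose * A).mulVec v = t • v},
      t ≤ sigmaMax A ^ 2 := by
  set TG : EuclideanSpace ℝ (Fin d2) →ₗ[ℝ] EuclideanSpace ℝ (Fin d2) :=
    Matrix.toEuclideanLin (A.transpose * A) with hTG
  set TA : EuclideanSpace ℝ (Fin d2) →ₗ[ℝ] EuclideanSpace ℝ (Fin d1) :=
    Matrix.toEuclideanLin A with hTA
  have hadj : LinearMap.adjoint TA = Matrix.toEuclideanLin A.transpose := by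
    rw [← real_conjTranspose, Matrix.toEuclideanLin_conjTranspose_eq_adjoint]
  have hcomp : ∀ w, TG w = Matrix.toEuclideanLin A.transpose (TA w) := by
    intro w
    ext j
    show ((A.transpose * A).mulVec w) j = (A.transpose.mulVec (A.mulVec w)) j
    rw [Matrix.mulVec_mulVec]
  have hinner : ∀ w, ⟪TG w, w⟫ = ‖TA w‖ ^ 2 := by
    intro w
    rw [hcomp, ← hadj, LinearMap.adjoint_inner_left, real_inner_self_eq_norm_sq]
  have hsym : TG.IsSymmetric := by
    intro w z
    rw [hcomp, hcomp, ← hadj, LinearMap.adjoint_inner_left, LinearMap.adjoint_inner_right]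
  have hd2 : Module.finrank ℝ (EuclideanSpace ℝ (Fin d2)) = d2 := finrank_euclideanSpace_fin
  set bb := hsym.eigenvectorBasis hd2 with hbb
  set lam := hsym.eigenvalues hd2 with hlam
  have hexists : ∃ i, lam i ≠ 0 := by
    by_contra hall
    push_neg at hall
    have hTG0 : TG = 0 := by
      apply bb.toBasis.ext
      intro i
      rw [OrthonormalBasis.coe_toBasis]
      have := hsym.apply_eigenvectorBasis hd2 i
      rw [← hbb, ← hlam] at this
      rw [this, hall i]
      simp
    have : (A.transpose * A) = 0 := by
      have := hTG
      rw [hTG0] at this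
      exact (LinearEquiv.map_eq_zero_iff _).mp this.symm
    apply hA
    rw [← Matrix.conjTranspose_mul_self_eq_zero (A := A), real_conjTranspose]
    exact this
  obtain ⟨i, hi⟩ := hexists
  have heig := hsym.apply_eigenvectorBasis hd2 i
  rw [← hbb, ← hlam] at heig
  have hnorm1 : ‖bb i‖ = 1 := bb.orthonormal.1 i
  refine ⟨lam i, ⟨hi, fun j => bb i j, ?_, ?_⟩, ?_⟩
  · intro h
    have : bb i = 0 := by
      ext j; exact congrFun h j
    have := bb.toBasis.ne_zero i
    rw [OrthonormalBasis.coe_toBasis] at this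
    exact this ‹bb i = 0›
  · funext j
    have := congrFun (congrArg (fun (z : EuclideanSpace ℝ (Fin d2)) (j : Fin d2) => z j) heig) j
    exact this
  · have h1 : ⟪TG (bb i), bb i⟫ = lam i := by
      rw [heig, real_inner_smul_left, real_inner_self_eq_norm_sq, hnorm1]
      simp
    have h2 : ‖TA (bb i)‖ ^ 2 ≤ sigmaMax A ^ 2 := by
      have hle : ‖TA (bb i)‖ ≤ sigmaMax A := by
        have := (LinearMap.toContinuousLinearMap TA).le_opNorm (bb i)
        simp only [LinearMap.coe_toContinuousLinearMap'] at this
        rw [hnorm1, mul_one] at this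
        exact this
      exact pow_le_pow_left₀ (norm_nonneg _) hle 2
    rw [← h1, hinner]
    exact h2

lemma contraction_step {F : Type*} [NormedAddCommGroup F] [InnerProductSpace ℝ F]
    [FiniteDimensional ℝ F]
    (S : F →L[ℝ] F) (hsym2 : ∀ u w : F, ⟪S u, w⟫ = ⟪u, S w⟫) (γ μ : ℝ)
    (hγ : 0 ≤ γ) (hμ0 : 0 ≤ μ)
    (hev : ∀ (t : ℝ) (u : F), u ≠ 0 → t ≠ 0 → S u = t • u → μ ≤ t ∧ γ * t ≤ 1/2)
    (e : F) (horth : ∀ w, S w = 0 → ⟪w, e⟫ = 0) :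
    ‖e - γ • S e‖ ^ 2 ≤ (1 - γ * μ) * ‖e‖ ^ 2 := by
  have hsymS : (S : F →ₗ[ℝ] F).IsSymmetric := fun u w => hsym2 u w
  set N := Module.finrank ℝ F with hNdef
  have hN : Module.finrank ℝ F = N := rfl
  set bb := hsymS.eigenvectorBasis hN with hbb
  set lam := hsymS.eigenvalues hN with hlam
  have hsq : ∀ v : F, ‖v‖ ^ 2 = ∑ i, (bb.repr v i) ^ 2 := by
    intro v
    rw [← normsq_eq_sum, LinearIsometryEquiv.norm_map]
  have heigen : ∀ i, S (bb i) = lam i • bb i := fun i => hsymS.apply_eigenvectorBasis hN i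
  have hrepr : ∀ i, bb.repr (e - γ • S e) i = (1 - γ * lam i) * bb.repr e i := by
    intro i
    have h1 : bb.repr (S e) i = lam i * bb.repr e i :=
      hsymS.eigenvectorBasis_apply_self_apply hN e i
    rw [map_sub, map_smul]
    show bb.repr e i - γ * bb.repr (S e) i = _
    rw [h1]; ring
  have hperi : ∀ i, ((1 - γ * lam i) * bb.repr e i) ^ 2 ≤ (1 - γ * μ) * (bb.repr e i) ^ 2 := by
    intro i
    by_cases hl : lam i = 0
    · have hker : S (bb i) = 0 := by rw [heigen i, hl, zero_smul]
      have : bb.repr e i = 0 := by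
        rw [OrthonormalBasis.repr_apply_apply]
        exact horth (bb i) hker
      simp [this]
    · have hbne : bb i ≠ 0 := by
        have := bb.toBasis.ne_zero i
        rwa [OrthonormalBasis.coe_toBasis] at this
      obtain ⟨h1, h2⟩ := hev (lam i) (bb i) hbne hl (heigen i)
      have h3 : γ * μ ≤ γ * lam i := mul_le_mul_of_nonneg_left h1 hγ
      have h4 : 0 ≤ γ * lam i := mul_nonneg hγ (hμ0.trans h1)
      have hkey : (1 - γ * lam i) ^ 2 ≤ 1 - γ * μ := by nlinarith
      rw [mul_pow]
      exact mul_le_mul_of_nonneg_right hkey (sq_nonneg _)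
  calc ‖e - γ • S e‖ ^ 2 = ∑ i, ((1 - γ * lam i) * bb.repr e i) ^ 2 := by
        rw [hsq]; exact Finset.sum_congr rfl fun i _ => by rw [hrepr i]
    _ ≤ ∑ i, (1 - γ * μ) * (bb.repr e i) ^ 2 := Finset.sum_le_sum fun i _ => hperi i
    _ = (1 - γ * μ) * ‖e‖ ^ 2 := by rw [hsq e, Finset.mul_sum]

lemma hasGradientAt_half_normSq {F : Type*} [NormedAddCommGroup F] [InnerProductSpace ℝ F]
    [CompleteSpace F] (T : F →L[ℝ] F) (v : F) (x : F) :
    HasGradientAt (fun y => (1/2 : ℝ) * ‖T y + v‖ ^ 2)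
      (ContinuousLinearMap.adjoint T (T x + v)) x := by
  have hξ : HasFDerivAt (fun y => T y + v) (T : F →L[ℝ] F) x := (T.hasFDerivAt).add_const v
  have h1 := (hξ.inner ℝ hξ).const_mul (1/2 : ℝ)
  have heq : (fun y => (1/2:ℝ) * ⟪T y + v, T y + v⟫) = fun y => (1/2:ℝ) * ‖T y + v‖ ^ 2 := by
    funext y; rw [real_inner_self_eq_norm_sq]
  rw [heq] at h1
  rw [hasGradientAt_iff_hasFDerivAt]
  refine h1.congr_fderiv ?_
  symm
  ext h
  simp only [InnerProductSpace.toDual_apply_apply, ContinuousLinearMap.coe_smul',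
    Pi.smul_apply, ContinuousLinearMap.coe_comp', Function.comp_apply,
    fderivInnerCLM_apply, ContinuousLinearMap.prod_apply, ContinuousLinearMap.coe_coe,
    smul_eq_mul]
  rw [ContinuousLinearMap.adjoint_inner_left]
  rw [real_inner_comm (T x + v) (T h)]
  ring

theorem hgd_bilinear_linear_convergence
    {n d1 d2 : ℕ} (hn : 0 < n)
    (A : Fin n → Matrix (Fin d1) (Fin d2) ℝ) (b : Fin n → Fin d1 → ℝ)
    (c : Fin n → Fin d2 → ℝ)
    (Abar : Matrix (Fin d1) (Fin d2) ℝ) (bbar : Fin d1 → ℝ) (cbar : Fin d2 → ℝ)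
    (hA : Abar = (n : ℝ)⁻¹ • ∑ i, A i)
    (hb : bbar = (n : ℝ)⁻¹ • ∑ i, b i)
    (hc : cbar = (n : ℝ)⁻¹ • ∑ i, c i)
    (hAne : Abar ≠ 0)
    (Xstar : Set (EuclideanSpace ℝ (Fin d1 ⊕ Fin d2)))
    (hXstar : Xstar = {x | xiBar Abar bbar cbar x = 0})
    (hne : Xstar.Nonempty)
    (γ : ℝ) (hγ : γ = 1 / (2 * sigmaMax Abar ^ 2))
    (x : ℕ → EuclideanSpace ℝ (Fin d1 ⊕ Fin d2))
    (hrec : ∀ k, x (k + 1) = x k - γ • gradient (Ham Abar bbar cbar) (x k))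
    (xstar : EuclideanSpace ℝ (Fin d1 ⊕ Fin d2))
    -- x* is the orthogonal projection of x⁰ onto X*
    (hxstar : xstar ∈ Xstar) (hproj : ∀ y ∈ Xstar, ‖x 0 - xstar‖ ≤ ‖x 0 - y‖) :
    ∀ k : ℕ, ‖x k - xstar‖ ^ 2
      ≤ (1 - γ * sigmaMinSq Abar) ^ k * ‖x 0 - xstar‖ ^ 2 := by
  have hxi : ∀ y, xiBar Abar bbar cbar y = Mop Abar y + vvec bbar cbar :=
    fun y => xiBar_eq Abar bbar cbar y
  have hHam : Ham Abar bbar cbar = fun y => (1 / 2 : ℝ) * ‖Mop Abar y + vvec bbar cbar‖ ^ 2 := by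
    funext y
    unfold Ham
    rw [hxi y]
  have hgradH : ∀ y, gradient (Ham Abar bbar cbar) y
      = ContinuousLinearMap.adjoint (Mop Abar) (Mop Abar y + vvec bbar cbar) := by
    intro y
    rw [hHam]
    exact (hasGradientAt_half_normSq (Mop Abar) (vvec bbar cbar) y).gradient
  have hstar0 : Mop Abar xstar + vvec bbar cbar = 0 := by
    have h := hxstar
    rw [hXstar] at h
    have h2 : xiBar Abar bbar cbar xstar = 0 := h
    rwa [hxi] at h2
  have hσpos : 0 < sigmaMax Abar := by
    rw [sigmaMax]
    apply norm_pos_iff.mpr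
    intro h0
    apply hAne
    have h1 : Matrix.toEuclideanLin Abar = 0 :=
      (LinearEquiv.map_eq_zero_iff LinearMap.toContinuousLinearMap).mp h0
    exact (LinearEquiv.map_eq_zero_iff _).mp h1
  have hL0 : (0:ℝ) < sigmaMax Abar ^ 2 := by positivity
  have hγpos : 0 < γ := by rw [hγ]; positivity
  have hγL : γ * sigmaMax Abar ^ 2 = 1 / 2 := by
    rw [hγ]
    field_simp
  have hbdd : BddBelow {t : ℝ | t ≠ 0 ∧ ∃ w : Fin d2 → ℝ,
      w ≠ 0 ∧ (Abar.transpose * Abar).mulVec w = t • w} :=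
    ⟨0, fun t ht => set_nonneg Abar t ht⟩
  obtain ⟨t0, ht0mem, ht0le⟩ := exists_elem_le Abar hAne
  have hμle : sigmaMinSq Abar ≤ sigmaMax Abar ^ 2 := le_trans (csInf_le hbdd ht0mem) ht0le
  have hμ0 : 0 ≤ sigmaMinSq Abar := le_csInf ⟨t0, ht0mem⟩ (set_nonneg Abar)
  have hev : ∀ (t : ℝ) (u : EuclideanSpace ℝ (Fin d1 ⊕ Fin d2)), u ≠ 0 → t ≠ 0 →
      Sop Abar u = t • u → sigmaMinSq Abar ≤ t ∧ γ * t ≤ 1/2 := by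
    intro t u hu ht heig
    constructor
    · exact csInf_le hbdd (eig_mem Abar t u hu ht heig)
    · have h1 : ⟪Sop Abar u, u⟫ = t * ‖u‖ ^ 2 := by
        rw [heig, real_inner_smul_left, real_inner_self_eq_norm_sq]
      have h2 : ⟪Sop Abar u, u⟫ = ‖Mop Abar u‖ ^ 2 := Sop_inner Abar u
      have h3 : ‖Mop Abar u‖ ^ 2 ≤ sigmaMax Abar ^ 2 * ‖u‖ ^ 2 := Mop_normsq_le Abar u
      have hu2 : 0 < ‖u‖ ^ 2 := by
        have : ‖u‖ ≠ 0 := fun h => hu (norm_eq_zero.mp h)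
        positivity
      have ht' : t ≤ sigmaMax Abar ^ 2 := by nlinarith
      calc γ * t ≤ γ * sigmaMax Abar ^ 2 := mul_le_mul_of_nonneg_left ht' hγpos.le
        _ = 1/2 := hγL
  have he : ∀ k, x (k + 1) - xstar = (x k - xstar) - γ • Sop Abar (x k - xstar) := by
    intro k
    have hgr : gradient (Ham Abar bbar cbar) (x k) = Sop Abar (x k - xstar) := by
      rw [hgradH]
      have h4 : Mop Abar (x k) + vvec bbar cbar = Mop Abar (x k - xstar) := by
        rw [map_sub, eq_neg_of_add_eq_zero_left hstar0, sub_neg_eq_add]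
      rw [h4]
      rfl
    rw [hrec k, hgr]
    abel
  have horth : ∀ k (w : EuclideanSpace ℝ (Fin d1 ⊕ Fin d2)),
      Sop Abar w = 0 → ⟪w, x k - xstar⟫ = 0 := by
    intro k
    induction k with
    | zero =>
      intro w hw
      have hMw : Mop Abar w = 0 := Sop_ker Abar w hw
      have hmem : ∀ t : ℝ, xstar + t • w ∈ Xstar := by
        intro t
        rw [hXstar]
        show xiBar Abar bbar cbar (xstar + t • w) = 0
        rw [hxi, map_add, map_smul, hMw, smul_zero, add_zero, hstar0]
      by_cases hw0 : w = 0
      · rw [hw0, inner_zero_left]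
      have hnw : 0 < ‖w‖ ^ 2 := by
        have : ‖w‖ ≠ 0 := fun h => hw0 (norm_eq_zero.mp h)
        positivity
      have hle : ∀ t : ℝ, ‖x 0 - xstar‖ ^ 2 ≤ ‖(x 0 - xstar) - t • w‖ ^ 2 := by
        intro t
        have h1 := hproj _ (hmem t)
        have h2 : x 0 - (xstar + t • w) = (x 0 - xstar) - t • w := by abel
        rw [h2] at h1
        exact pow_le_pow_left₀ (norm_nonneg _) h1 2
      have hexp : ∀ t : ℝ, ‖(x 0 - xstar) - t • w‖ ^ 2
          = ‖x 0 - xstar‖ ^ 2 - 2 * (t * ⟪x 0 - xstar, w⟫) + t ^ 2 * ‖w‖ ^ 2 := by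
        intro t
        rw [norm_sub_sq_real, real_inner_smul_right, norm_smul]
        rw [mul_pow]
        simp only [sq_abs, Real.norm_eq_abs]
      set cc := ⟪x 0 - xstar, w⟫ with hcc
      have hkey := hle (cc / ‖w‖ ^ 2)
      rw [hexp] at hkey
      have hczero : cc = 0 := by
        have h5 : 0 ≤ -2 * (cc / ‖w‖ ^ 2 * cc) + (cc / ‖w‖ ^ 2) ^ 2 * ‖w‖ ^ 2 := by linarith
        rw [div_pow] at h5
        have h6 : (cc / ‖w‖ ^ 2 * cc) = cc ^ 2 / ‖w‖ ^ 2 := by ring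
        rw [h6] at h5
        have h7 : cc ^ 2 / (‖w‖ ^ 2) ^ 2 * ‖w‖ ^ 2 = cc ^ 2 / ‖w‖ ^ 2 := by
          field_simp
        rw [h7] at h5
        have h8 : cc ^ 2 / ‖w‖ ^ 2 ≤ 0 := by linarith
        have h9 : 0 ≤ cc ^ 2 / ‖w‖ ^ 2 := by positivity
        have h10 : cc ^ 2 / ‖w‖ ^ 2 = 0 := le_antisymm h8 h9
        have h11 := (div_eq_zero_iff.mp h10).resolve_right (by positivity)
        exact pow_eq_zero_iff (n := 2) (by norm_num) |>.mp h11
      rw [real_inner_comm]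
      exact hczero
    | succ k ih =>
      intro w hw
      have h9 : ⟪Sop Abar w, x k - xstar⟫ = ⟪w, Sop Abar (x k - xstar)⟫ :=
        Sop_symm Abar w _
      rw [he k, inner_sub_right, real_inner_smul_right, ih w hw, ← h9, hw]
      simp
  have h1γμ : 0 ≤ 1 - γ * sigmaMinSq Abar := by
    have h12 : γ * sigmaMinSq Abar ≤ γ * sigmaMax Abar ^ 2 :=
      mul_le_mul_of_nonneg_left hμle hγpos.le
    rw [hγL] at h12
    linarith
  intro k
  induction k with
  | zero => simp
  | succ k ih =>
    have hcontr := contraction_step (Sop Abar) (Sop_symm Abar) γ (sigmaMinSq Abar)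
      hγpos.le hμ0 hev (x k - xstar) (horth k)
    rw [he k]
    calc ‖(x k - xstar) - γ • Sop Abar (x k - xstar)‖ ^ 2
        ≤ (1 - γ * sigmaMinSq Abar) * ‖x k - xstar‖ ^ 2 := hcontr
      _ ≤ (1 - γ * sigmaMinSq Abar) * ((1 - γ * sigmaMinSq Abar) ^ k * ‖x 0 - xstar‖ ^ 2) :=
          mul_le_mul_of_nonneg_left ih h1γμ
      _ = (1 - γ * sigmaMinSq Abar) ^ (k + 1) * ‖x 0 - xstar‖ ^ 2 := by ring
end
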